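/- Let G be a non-archimedean CLI Polish group, X a countable discrete transitive Polish G-space (i.e., X is a single G-orbit), and 𝒢 = (G_n) ∈ dgnb(G). Then there exists k < ω such that ρ(T_𝒢^X) ≤ ρ^k(𝒢). -/

import Mathlib

noncomputable section

/-- `omegaPart a` is ω(a): the largest limit ordinal `≤ a`, or `0` if there is none. -/
def omegaPart (a : Ordinal) : Ordinal :=
  sSup {b : Ordinal | (b = 0 ∨ Order.IsSuccLimit b) ∧ b ≤ a}

/-- `IsTree lt` says that the binary relation `lt` on `T` is a tree order: it is irreflexive,
transitive, and the set of predecessors of any node is finite and linearly ordered. -/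
def IsTree {T : Type*} (lt : T → T → Prop) : Prop :=
  (∀ s, ¬ lt s s) ∧
  (∀ s t u, lt s t → lt t u → lt s u) ∧
  (∀ s, {t | lt t s}.Finite) ∧
  (∀ s t u, lt t s → lt u s → t = u ∨ lt t u ∨ lt u t)

/-- The length `lh s` of a node of a tree: the number of its strict predecessors. -/
def lh {T : Type*} (lt : T → T → Prop) (s : T) : ℕ :=
  Nat.card {t | lt t s}

/-- The rank `ρ(T)` of a tree `(T, lt)`: for a well-founded tree it is
`sup { ρ_T(s) + 1 : s ∈ T }` where `ρ_T(s) = sup { ρ_T(t) + 1 : s < t }`;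
for an ill-founded tree we use the junk value `0`. -/
def rhoRel {T : Type u} (lt : T → T → Prop) : Ordinal.{u} :=
  letI := Classical.dec (WellFounded (Function.swap lt))
  if h : WellFounded (Function.swap lt) then ⨆ s : T, Order.succ ((h.apply s).rank) else 0

/-- The nodes of the tree `T_ℰ^X` associated to a sequence `E` of (equivalence) relations
on `X`: pairs `(n, C)` where `C` is a non-singleton class `[x]_{E n}`. -/
def TreeNode (X : Type u) (E : ℕ → X → X → Prop) : Type u :=
  {p : ℕ × Set X // ∃ x : X, p.2 = {y | E p.1 x y} ∧ p.2 ≠ {x}}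

/-- The tree order on `T_ℰ^X`: `(n, C) < (m, D)` iff `n < m` and `C ⊇ D`. -/
def nodeLT {X : Type u} (E : ℕ → X → X → Prop) :
    TreeNode X E → TreeNode X E → Prop :=
  fun s t => s.1.1 < t.1.1 ∧ t.1.2 ⊆ s.1.2

/-- The tree `T_ℰ^X` is well-founded: no infinite strictly increasing sequence. -/
def TreeWF (X : Type u) (E : ℕ → X → X → Prop) : Prop :=
  WellFounded (Function.swap (nodeLT E))

/-- The rank `ρ(T_ℰ^X)`. -/
def treeRho (X : Type u) (E : ℕ → X → X → Prop) : Ordinal.{u} :=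
  rhoRel (nodeLT E)

/-- A Polish group: a topological group whose topology is Polish. -/
def IsPolishGroup (G : Type u) [Group G] [TopologicalSpace G] : Prop :=
  IsTopologicalGroup G ∧ PolishSpace G

/-- A topological group is non-archimedean if the open subgroups form a
neighborhood base of the identity. -/
def IsNonArch (G : Type u) [Group G] [TopologicalSpace G] : Prop :=
  ∀ U ∈ nhds (1 : G), ∃ H : Subgroup G, IsOpen (H : Set G) ∧ (H : Set G) ⊆ U

/-- A topological group is CLI if it admits a compatible complete left-invariant metric. -/
def IsCLI (G : Type u) [Group G] [TopologicalSpace G] : Prop :=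
  ∃ m : MetricSpace G,
    m.toUniformSpace.toTopologicalSpace = ‹TopologicalSpace G› ∧
    @CompleteSpace G m.toUniformSpace ∧
    ∀ g h k : G, m.dist (g * h) (g * k) = m.dist h k

/-- A topological group is TSI if it admits a compatible complete two-sided-invariant metric. -/
def IsTSI (G : Type u) [Group G] [TopologicalSpace G] : Prop :=
  ∃ m : MetricSpace G,
    m.toUniformSpace.toTopologicalSpace = ‹TopologicalSpace G› ∧
    @CompleteSpace G m.toUniformSpace ∧
    ∀ g h k : G, m.dist (g * h) (g * k) = m.dist h k ∧ m.dist (h * g) (k * g) = m.dist h k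

/-- `Dgnb G` is the set `dgnb(G)`: decreasing sequences `(G_n)` of open subgroups of `G`
with `G_0 = G` forming a neighborhood base of `1_G`. -/
structure Dgnb (G : Type u) [Group G] [TopologicalSpace G] where
  seq : ℕ → Subgroup G
  isOpen : ∀ n, IsOpen ((seq n : Set G))
  antitone : ∀ n, seq (n + 1) ≤ seq n
  zero_eq_top : seq 0 = ⊤
  basis : ∀ U ∈ nhds (1 : G), ∃ n, ((seq n : Set G)) ⊆ U

/-- The orbit equivalence relation of (the action of) a subgroup `H ≤ G` on a `G`-space `X`:
`x ∼ y` iff `g • x = y` for some `g ∈ H`. -/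
def subOrbit {G : Type u} [Group G] (H : Subgroup G) (X : Type v) [MulAction G X] :
    X → X → Prop :=
  fun x y => ∃ g ∈ H, g • x = y

/-- The tree `T_𝒢^X` of a `𝒢 ∈ dgnb(G)` and a `G`-space `X`: nodes are pairs `(n, C)`
with `C` a non-singleton `G_n`-orbit. We record it by its defining sequence of relations. -/
def dgnbRel {G : Type u} [Group G] [TopologicalSpace G] (𝒢 : Dgnb G) (X : Type v)
    [MulAction G X] : ℕ → X → X → Prop :=
  fun n => subOrbit (𝒢.seq n) X

/-- `ρ^k(𝒢) = ρ(T_𝒢^{G/G_k})`, where `G` acts by left translation on `G/G_k`. -/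
def rhoK {G : Type u} [Group G] [TopologicalSpace G] (𝒢 : Dgnb G) (k : ℕ) : Ordinal.{u} :=
  treeRho (G ⧸ 𝒢.seq k) (dgnbRel 𝒢 (G ⧸ 𝒢.seq k))

/-- `ρ(𝒢) = ρ(T_𝒢^{X(𝒢)})` where `X(𝒢) = ⊔_k G/G_k` is the disjoint union of the coset
spaces, with `G` acting by left translation on each summand. -/
def rhoDgnb {G : Type u} [Group G] [TopologicalSpace G] (𝒢 : Dgnb G) : Ordinal.{u} :=
  treeRho (Σ k : ℕ, G ⧸ 𝒢.seq k)
    (fun n p q => ∃ g ∈ 𝒢.seq n, q = ⟨p.1, g • p.2⟩)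

/-- `G` is α-CLI if `ρ(𝒢) ≤ ω·α` for any (equivalently, some) `𝒢 ∈ dgnb(G)`. -/
def IsAlphaCLI (G : Type u) [Group G] [TopologicalSpace G] (α : Ordinal.{u}) : Prop :=
  ∀ 𝒢 : Dgnb G, rhoDgnb 𝒢 ≤ Ordinal.omega0 * α

/-- `G` is L-α-CLI if `rank(G) ≤ α`, i.e. `ω(ρ(𝒢)) ≤ ω·α` for any (equivalently, some)
`𝒢 ∈ dgnb(G)`. -/
def IsLAlphaCLI (G : Type u) [Group G] [TopologicalSpace G] (α : Ordinal.{u}) : Prop :=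
  ∀ 𝒢 : Dgnb G, omegaPart (rhoDgnb 𝒢) ≤ Ordinal.omega0 * α


section AuxLemmas

variable {G : Type} [Group G] {X : Type} [MulAction G X]

lemma subOrbit_refl (H : Subgroup G) (x : X) : subOrbit H X x x :=
  ⟨1, H.one_mem, one_smul _ _⟩

lemma subOrbit_symm {H : Subgroup G} {x y : X} (h : subOrbit H X x y) : subOrbit H X y x := by
  obtain ⟨g, hg, rfl⟩ := h
  exact ⟨g⁻¹, H.inv_mem hg, inv_smul_smul g x⟩

lemma subOrbit_trans {H : Subgroup G} {x y z : X} (h : subOrbit H X x y)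
    (h' : subOrbit H X y z) : subOrbit H X x z := by
  obtain ⟨g, hg, rfl⟩ := h
  obtain ⟨g', hg', rfl⟩ := h'
  exact ⟨g' * g, H.mul_mem hg' hg, (mul_smul g' g x).symm ▸ rfl⟩

lemma cls_eq_of_mem {H : Subgroup G} {x y : X} (h : subOrbit H X x y) :
    {z | subOrbit H X x z} = {z | subOrbit H X y z} := by
  ext z
  exact ⟨fun hz => subOrbit_trans (subOrbit_symm h) hz, fun hz => subOrbit_trans h hz⟩

lemma cls_mono {H K : Subgroup G} (hHK : H ≤ K) (x : X) :
    {z | subOrbit H X x z} ⊆ {z | subOrbit K X x z} := by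
  rintro z ⟨g, hg, rfl⟩; exact ⟨g, hHK hg, rfl⟩

lemma image_cls {Y : Type} [MulAction G Y] (φ : Y → X)
    (he : ∀ (g : G) (y : Y), φ (g • y) = g • φ y) (H : Subgroup G) (q : Y) :
    φ '' {z | subOrbit H Y q z} = {w | subOrbit H X (φ q) w} := by
  ext w
  constructor
  · rintro ⟨z, ⟨g, hg, rfl⟩, rfl⟩
    exact ⟨g, hg, (he g q).symm⟩
  · rintro ⟨g, hg, rfl⟩
    exact ⟨g • q, ⟨g, hg, rfl⟩, he g q⟩

lemma lemC {Y : Type} [MulAction G Y]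
    (S : ℕ → Subgroup G) (hanti : ∀ {n m : ℕ}, n ≤ m → S m ≤ S n)
    (φ : Y → X) (hs : Function.Surjective φ) (he : ∀ (g : G) (y : Y), φ (g • y) = g • φ y)
    (hwfX : WellFounded (Function.swap (nodeLT (fun n => subOrbit (S n) X))))
    (hwfY : WellFounded (Function.swap (nodeLT (fun n => subOrbit (S n) Y)))) :
    treeRho X (fun n => subOrbit (S n) X) ≤ treeRho Y (fun n => subOrbit (S n) Y) := by
  set E := fun n => subOrbit (S n) X with hE
  set F := fun n => subOrbit (S n) Y with hF
  have key : ∀ s : TreeNode X E, ∀ t : TreeNode Y F,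
      s.1.1 = t.1.1 → φ '' t.1.2 = s.1.2 → (hwfX.apply s).rank ≤ (hwfY.apply t).rank := by
    intro s
    refine hwfX.induction (C := fun s => ∀ t : TreeNode Y F,
      s.1.1 = t.1.1 → φ '' t.1.2 = s.1.2 → (hwfX.apply s).rank ≤ (hwfY.apply t).rank) s ?_
    clear s; intro s IH t hnn him
    rw [(hwfX.apply s).rank_eq]
    refine Ordinal.iSup_le ?_
    rintro ⟨s', hs'⟩
    have hlt : s.1.1 < s'.1.1 := hs'.1
    have hsub : s'.1.2 ⊆ s.1.2 := hs'.2
    obtain ⟨x', hx'C, hx'ne⟩ := s'.2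
    have hx'mem : x' ∈ s'.1.2 := by rw [hx'C]; exact subOrbit_refl _ _
    have : x' ∈ φ '' t.1.2 := by rw [him]; exact hsub hx'mem
    obtain ⟨q', hq't, hφq⟩ := this
    set D' : Set Y := {z | subOrbit (S s'.1.1) Y q' z} with hD'
    have himD' : φ '' D' = s'.1.2 := by
      rw [hD', image_cls φ he, hφq, hx'C]
    have hD'sub : D' ⊆ t.1.2 := by
      obtain ⟨qw, hqwC, _⟩ := t.2
      have hq'cls : t.1.2 = {z | subOrbit (S t.1.1) Y q' z} := by
        rw [hqwC]; exact cls_eq_of_mem (by rw [hqwC] at hq't; exact hq't)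
      rw [hq'cls]
      exact cls_mono (hanti (by omega)) q'
    have hD'ne : D' ≠ {q'} := by
      intro h
      exact hx'ne (by rw [← himD', h, Set.image_singleton, hφq])
    refine le_trans (Order.succ_le_succ (IH s' hs' ⟨(s'.1.1, D'), q', rfl, hD'ne⟩ rfl himD'))
      (Order.succ_le_of_lt (Acc.rank_lt_of_rel (hwfY.apply _) ?_))
    exact ⟨by rw [← hnn]; exact hlt, hD'sub⟩
  have e1 : treeRho X E = ⨆ s : TreeNode X E, Order.succ ((hwfX.apply s).rank) := by
    unfold treeRho rhoRel; exact dif_pos hwfX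
  have e2 : treeRho Y F = ⨆ t : TreeNode Y F, Order.succ ((hwfY.apply t).rank) := by
    unfold treeRho rhoRel; exact dif_pos hwfY
  rw [e1, e2]
  refine Ordinal.iSup_le ?_
  intro s
  obtain ⟨x, hxC, hxne⟩ := s.2
  obtain ⟨q, hq⟩ := hs x
  have hne : {z | subOrbit (S s.1.1) Y q z} ≠ {q} := by
    intro h
    apply hxne
    rw [hxC, ← hq, ← image_cls φ he (S s.1.1) q, h, Set.image_singleton, hq]
  have him : φ '' ({z | subOrbit (S s.1.1) Y q z}) = s.1.2 := by
    rw [image_cls φ he, hq, hxC]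
  exact le_trans (Order.succ_le_succ (key s ⟨(s.1.1, _), q, rfl, hne⟩ rfl him))
    (Ordinal.le_iSup _ _)

lemma lemB {G : Type} [Group G] [MetricSpace G] [IsTopologicalGroup G] [CompleteSpace G]
    (hinv : ∀ g h k : G, dist (g * h) (g * k) = dist h k)
    (S : ℕ → Subgroup G) (hopen : ∀ n, IsOpen (S n : Set G))
    (hanti : ∀ {n m : ℕ}, n ≤ m → S m ≤ S n)
    (hbasis : ∀ U ∈ nhds (1 : G), ∃ n, (S n : Set G) ⊆ U)
    (Y : Type) [MulAction G Y]
    (hstab : ∀ y : Y, ∃ m, ∀ g ∈ S m, g • y = y) :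
    WellFounded (Function.swap (nodeLT (fun n => subOrbit (S n) Y))) := by
  set F := fun n => subOrbit (S n) Y with hF
  by_contra hwf
  haveI : IsIrrefl (TreeNode Y F) (Function.swap (nodeLT F)) :=
    ⟨fun a h => lt_irrefl _ h.1⟩
  haveI : IsTrans (TreeNode Y F) (Function.swap (nodeLT F)) :=
    ⟨fun a b c (hab : nodeLT F b a) (hbc : nodeLT F c b) =>
      (⟨hbc.1.trans hab.1, subset_trans hab.2 hbc.2⟩ : nodeLT F c a)⟩
  haveI : IsStrictOrder (TreeNode Y F) (Function.swap (nodeLT F)) := ⟨⟩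
  rw [RelEmbedding.wellFounded_iff_isEmpty, not_isEmpty_iff] at hwf
  obtain ⟨f⟩ := hwf
  have hchain : ∀ i : ℕ, nodeLT F (f i) (f (i + 1)) := fun i => f.map_rel_iff.2 (Nat.lt_succ_self i)
  set n : ℕ → ℕ := fun i => (f i).1.1 with hn
  have nmono : StrictMono n := strictMono_nat_of_lt_succ fun i => (hchain i).1
  have hni : ∀ i, i ≤ n i := fun i => nmono.le_apply
  have hCsub : ∀ i j : ℕ, i ≤ j → (f j).1.2 ⊆ (f i).1.2 := by
    intro i j hij
    induction j, hij using Nat.le_induction with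
    | base => exact subset_rfl
    | succ j hij ih => exact subset_trans (hchain j).2 ih
  set x : ℕ → Y := fun i => (f i).2.choose with hx
  have hxC : ∀ i, (f i).1.2 = {y | F (n i) (x i) y} := fun i => (f i).2.choose_spec.1
  have hxne : ∀ i, (f i).1.2 ≠ {x i} := fun i => (f i).2.choose_spec.2
  have hxmem : ∀ i, x i ∈ (f i).1.2 := fun i => by rw [hxC i]; exact subOrbit_refl _ _
  have hstep : ∀ i : ℕ, ∃ g ∈ S (n (i + 1)), g • x (i + 1) = x (i + 2) := by
    intro i
    have : x (i + 2) ∈ (f (i + 1)).1.2 := hCsub (i + 1) (i + 2) (by omega) (hxmem (i + 2))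
    rw [hxC (i + 1)] at this
    exact this
  choose h hhmem hhsmul using hstep
  set w : ℕ → G := fun i => Nat.rec (1 : G) (fun i wi => h i * wi) i with hw
  have hw0 : w 0 = 1 := rfl
  have hwsucc : ∀ i, w (i + 1) = h i * w i := fun i => rfl
  have hwz : ∀ i, w i • x 1 = x (i + 1) := by
    intro i
    induction i with
    | zero => rw [hw0, one_smul]
    | succ i ih => rw [hwsucc, mul_smul, ih, hhsmul]
  have hquot : ∀ i j : ℕ, i ≤ j → w j * (w i)⁻¹ ∈ S (n (i + 1)) := by
    intro i j hij
    induction j, hij using Nat.le_induction with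
    | base => simpa using (S (n (i + 1))).one_mem
    | succ j hij ih =>
      rw [hwsucc, mul_assoc]
      exact (S (n (i + 1))).mul_mem
        (hanti (nmono.monotone (by omega)) (hhmem j)) ih
  have hcauchy : CauchySeq (fun i => (w i)⁻¹) := by
    rw [Metric.cauchySeq_iff']
    intro ε hε
    obtain ⟨m, hm⟩ := hbasis (Metric.ball (1 : G) ε) (Metric.ball_mem_nhds _ hε)
    refine ⟨m, fun j hj => ?_⟩
    have hu : w j * (w m)⁻¹ ∈ S m :=
      hanti (le_trans (Nat.le_succ m) (hni (m + 1))) (hquot m j hj)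
    have heq : dist ((w j)⁻¹) ((w m)⁻¹) = dist (w j * (w m)⁻¹) 1 := by
      have h2 := hinv ((w j)⁻¹) (w j * (w m)⁻¹) 1
      rw [mul_one, ← mul_assoc, inv_mul_cancel, one_mul] at h2
      rw [← h2, dist_comm]
    rw [heq]
    exact Metric.mem_ball.1 (hm hu)
  obtain ⟨p', hp'⟩ := cauchySeq_tendsto_of_complete hcauchy
  have hwlim : Filter.Tendsto w Filter.atTop (nhds p'⁻¹) := by
    simpa using hp'.inv
  have h1lim : Filter.Tendsto (fun i => w i * p') Filter.atTop (nhds (1 : G)) := by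
    simpa using hwlim.mul_const p'
  set z : Y := p'⁻¹ • x 1 with hz
  obtain ⟨m₂, hm₂⟩ := hstab z
  have hev : ∀ᶠ i in Filter.atTop, w i * p' ∈ (S m₂ : Set G) :=
    h1lim ((hopen m₂).mem_nhds (S m₂).one_mem)
  obtain ⟨N₁, hN₁⟩ := Filter.eventually_atTop.1 hev
  set i : ℕ := max N₁ m₂ with hi
  have hxi : x (i + 1) = z := by
    have h3 : (w i * p') • z = w i • x 1 := by
      rw [hz, smul_smul, mul_assoc, mul_inv_cancel, mul_one]
    rw [← hwz i, ← h3, hm₂ _ (hN₁ i (le_max_left _ _))]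
  have hsingleton : (f (i + 1)).1.2 = {x (i + 1)} := by
    rw [hxC (i + 1)]
    ext y
    simp only [Set.mem_setOf_eq, Set.mem_singleton_iff]
    constructor
    · rintro ⟨g, hg, rfl⟩
      have hgm : g ∈ S m₂ := hanti (le_trans (le_max_right N₁ m₂) (le_trans (Nat.le_succ i) (hni (i + 1)))) hg
      rw [hxi, hm₂ g hgm]
    · rintro rfl
      exact subOrbit_refl _ _
  exact hxne (i + 1) hsingleton

end AuxLemmas

theorem statement_17 (G : Type) [Group G] [TopologicalSpace G] [IsTopologicalGroup G]
    [PolishSpace G] (hna : IsNonArch G) (hcli : IsCLI G)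
    (X : Type) [TopologicalSpace X] [DiscreteTopology X] [Countable X]
    [MulAction G X] [ContinuousSMul G X] [MulAction.IsPretransitive G X] (𝒢 : Dgnb G) :
    ∃ k : ℕ, treeRho X (dgnbRel 𝒢 X) ≤ rhoK 𝒢 k := by
  by_cases hX : Nonempty X
  swap
  · haveI : IsEmpty X := not_nonempty_iff.mp hX
    haveI hemp : IsEmpty (TreeNode X (dgnbRel 𝒢 X)) := ⟨fun s => isEmptyElim s.2.choose⟩
    have hwf : WellFounded (Function.swap (nodeLT (dgnbRel 𝒢 X))) :=
      ⟨fun a => isEmptyElim a⟩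
    refine ⟨0, ?_⟩
    have e : treeRho X (dgnbRel 𝒢 X)
        = ⨆ s : TreeNode X (dgnbRel 𝒢 X), Order.succ ((hwf.apply s).rank) := by
      unfold treeRho rhoRel; exact dif_pos hwf
    rw [e]
    exact Ordinal.iSup_le fun s => isEmptyElim s
  obtain ⟨x₀⟩ := hX
  obtain ⟨m, htop, hcomp, hinv⟩ := hcli
  subst htop
  letI : MetricSpace G := m
  haveI : CompleteSpace G := hcomp
  have hinv' : ∀ g h k : G, dist (g * h) (g * k) = dist h k := hinv
  have hanti : ∀ {n m : ℕ}, n ≤ m → 𝒢.seq m ≤ 𝒢.seq n := by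
    intro n m h
    induction m, h using Nat.le_induction with
    | base => exact le_rfl
    | succ j hj ih => exact le_trans (𝒢.antitone j) ih
  have hstabX : ∀ x : X, ∃ m, ∀ g ∈ 𝒢.seq m, g • x = x := by
    intro x
    have hcont : Continuous fun g : G => g • x := continuous_id.smul continuous_const
    have hopen : IsOpen {g : G | g • x = x} :=
      (isOpen_discrete ({x} : Set X)).preimage hcont
    obtain ⟨m', hm'⟩ := 𝒢.basis _ (hopen.mem_nhds (by simp))
    exact ⟨m', fun g hg => hm' hg⟩
  obtain ⟨k, hk⟩ := hstabX x₀
  have hwd : ∀ a b : G, (QuotientGroup.leftRel (𝒢.seq k)).r a b → a • x₀ = b • x₀ := by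
    intro a b hab
    rw [QuotientGroup.leftRel_apply] at hab
    have : b = a * (a⁻¹ * b) := by group
    rw [this, mul_smul, hk _ hab]
  set φ : G ⧸ 𝒢.seq k → X := fun q => Quotient.liftOn' q (fun g => g • x₀) hwd with hφ
  have he : ∀ (g : G) (q : G ⧸ 𝒢.seq k), φ (g • q) = g • φ q := by
    intro g q
    refine Quotient.inductionOn' q ?_
    intro a
    show (g * a) • x₀ = g • (a • x₀)
    exact mul_smul g a x₀
  have hsurj : Function.Surjective φ := by
    intro x
    obtain ⟨g, hg⟩ := MulAction.exists_smul_eq G x₀ x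
    exact ⟨QuotientGroup.mk g, hg⟩
  have hstabQ : ∀ q : G ⧸ 𝒢.seq k, ∃ m, ∀ g ∈ 𝒢.seq m, g • q = q := by
    intro q
    refine Quotient.inductionOn' q ?_
    intro a
    have hcont : Continuous fun h : G => a⁻¹ * h * a :=
      (continuous_const.mul continuous_id).mul continuous_const
    have hopen : IsOpen ((fun h : G => a⁻¹ * h * a) ⁻¹' (𝒢.seq k : Set G)) :=
      (𝒢.isOpen k).preimage hcont
    have h1 : (1 : G) ∈ (fun h : G => a⁻¹ * h * a) ⁻¹' (𝒢.seq k : Set G) := by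
      simp [Subgroup.one_mem]
    obtain ⟨m', hm'⟩ := 𝒢.basis _ (hopen.mem_nhds h1)
    refine ⟨m', fun g hg => ?_⟩
    have hmem : a⁻¹ * g * a ∈ 𝒢.seq k := hm' hg
    show QuotientGroup.mk (g * a) = QuotientGroup.mk a
    rw [QuotientGroup.eq]
    have : (g * a)⁻¹ * a = (a⁻¹ * g * a)⁻¹ := by group
    rw [this]
    exact (𝒢.seq k).inv_mem hmem
  have hwfX : WellFounded (Function.swap (nodeLT (fun n => subOrbit (𝒢.seq n) X))) :=
    lemB hinv' 𝒢.seq 𝒢.isOpen hanti 𝒢.basis X hstabX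
  have hwfQ : WellFounded
      (Function.swap (nodeLT (fun n => subOrbit (𝒢.seq n) (G ⧸ 𝒢.seq k)))) :=
    lemB hinv' 𝒢.seq 𝒢.isOpen hanti 𝒢.basis (G ⧸ 𝒢.seq k) hstabQ
  exact ⟨k, lemC 𝒢.seq hanti φ hsurj he hwfX hwfQ⟩

end
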